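/- Let R be a principal ideal domain and M a free R-module of finite rank n. If u : M → M is an R-linear endomorphism whose image u(M) is also free of rank n, then the Fitting ideal of the quotient M/u(M) (the ideal generated by the product of its invariant factors) equals the ideal generated by det(u). -/

import Mathlib

set_option linter.unusedSectionVars false
set_option maxHeartbeats 1000000
open Submodule Pointwise UniqueFactorizationMonoid

variable {R : Type} [CommRing R] [IsDomain R] [IsPrincipalIdealRing R]

lemma dvd_aux {p a b : R} (hp : Prime p) (hab : a = p * b) (y : R) :
    a ∣ p * y ↔ b ∣ y := by
  subst hab; exact mul_dvd_mul_iff_left hp.ne_zero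

lemma dvd_aux' {p a : R} (hp : Prime p) (hpa : ¬ p ∣ a) (y : R) :
    a ∣ p * y ↔ a ∣ y :=
  ⟨fun h => (((hp.coprime_iff_not_dvd).mpr hpa).symm).dvd_of_dvd_mul_left h,
   fun h => h.mul_left p⟩

lemma torsionBy_quot_span (p a b : R) (h : ∀ y : R, a ∣ p * y ↔ b ∣ y) :
    Submodule.torsionBy R (R ⧸ Ideal.span {a}) p
      = Submodule.map (Ideal.span {a}).mkQ (Ideal.span {b}) := by
  have hba : b ∣ a := (h a).mp (Dvd.intro_left _ rfl)
  have hle : Ideal.span {a} ≤ Ideal.span {b} :=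
    Ideal.span_singleton_le_span_singleton.mpr hba
  ext x
  obtain ⟨y, rfl⟩ := Submodule.Quotient.mk_surjective _ x
  rw [Submodule.mem_torsionBy_iff,
    show p • (Submodule.Quotient.mk y : R ⧸ Ideal.span {a})
        = Submodule.Quotient.mk (p • y) from (Submodule.Quotient.mk_smul _ _ _).symm,
    Submodule.Quotient.mk_eq_zero, Submodule.mem_map]
  constructor
  · intro hmem
    have hay : a ∣ p * y := Ideal.mem_span_singleton.mp (by simpa [smul_eq_mul] using hmem)
    exact ⟨y, Ideal.mem_span_singleton.mpr ((h y).mp hay), rfl⟩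
  · rintro ⟨z, hz, hzy⟩
    have hyz : z - y ∈ Ideal.span {a} := (Submodule.Quotient.eq _).mp hzy
    have hby : b ∣ y := by
      have h1 : b ∣ z - y := Ideal.mem_span_singleton.mp (hle hyz)
      have h2 : b ∣ z := Ideal.mem_span_singleton.mp hz
      simpa using dvd_sub h2 h1
    simpa [smul_eq_mul, Ideal.mem_span_singleton] using (h y).mpr hby

lemma smul_top_quot_span (p a : R) :
    (p • ⊤ : Submodule R (R ⧸ Ideal.span {a}))
      = Submodule.map (Ideal.span {a}).mkQ (Ideal.span {p}) := by
  ext x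
  obtain ⟨y, rfl⟩ := Submodule.Quotient.mk_surjective _ x
  constructor
  · intro hx
    obtain ⟨z, -, hz⟩ := Set.mem_smul_set.mp hx
    obtain ⟨w, rfl⟩ := Submodule.Quotient.mk_surjective _ z
    refine ⟨p * w, Ideal.mem_span_singleton.mpr ⟨w, rfl⟩, ?_⟩
    rw [Submodule.mkQ_apply, ← hz, ← Submodule.Quotient.mk_smul, smul_eq_mul]
  · rintro ⟨z, hz, hzy⟩
    rw [← hzy]
    obtain ⟨w, rfl⟩ := Ideal.mem_span_singleton.mp hz
    refine Set.mem_smul_set.mpr ⟨Submodule.Quotient.mk w, trivial, ?_⟩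
    rw [Submodule.mkQ_apply, ← Submodule.Quotient.mk_smul, smul_eq_mul]

noncomputable def quotTorsionByEquiv (p a b : R) (h : ∀ y : R, a ∣ p * y ↔ b ∣ y) :
    ((R ⧸ Ideal.span {a}) ⧸ Submodule.torsionBy R (R ⧸ Ideal.span {a}) p)
      ≃ₗ[R] R ⧸ Ideal.span {b} := by
  have hba : b ∣ a := (h a).mp (Dvd.intro_left _ rfl)
  have hle : Ideal.span {a} ≤ Ideal.span {b} :=
    Ideal.span_singleton_le_span_singleton.mpr hba
  exact (Submodule.quotEquivOfEq _ _ (torsionBy_quot_span p a b h)).trans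
    ((Submodule.quotientQuotientEquivQuotientSup _ _).trans
      (Submodule.quotEquivOfEq _ _ (sup_eq_right.mpr hle)))

noncomputable def quotSmulTopEquiv (p a : R) :
    ((R ⧸ Ideal.span {a}) ⧸ (p • ⊤ : Submodule R (R ⧸ Ideal.span {a})))
      ≃ₗ[R] R ⧸ (Ideal.span {a} ⊔ Ideal.span {p}) :=
  (Submodule.quotEquivOfEq _ _ (smul_top_quot_span p a)).trans
    (Submodule.quotientQuotientEquivQuotientSup _ _)

section PiLemmas

variable {ι : Type} [Fintype ι] {X : ι → Type} [∀ i, AddCommGroup (X i)] [∀ i, Module R (X i)]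

lemma torsionBy_pi (p : R) :
    Submodule.torsionBy R (∀ i, X i) p
      = Submodule.pi Set.univ (fun i => Submodule.torsionBy R (X i) p) := by
  ext x
  simp only [Submodule.mem_torsionBy_iff, Submodule.mem_pi, Set.mem_univ, forall_true_left,
    funext_iff]
  simp [Pi.smul_apply]

lemma smul_top_pi (p : R) :
    (p • ⊤ : Submodule R (∀ i, X i))
      = Submodule.pi Set.univ (fun i => (p • ⊤ : Submodule R (X i))) := by
  ext x
  simp only [Submodule.mem_pi, Set.mem_univ, forall_true_left]
  constructor
  · intro hx
    obtain ⟨y, -, rfl⟩ := Set.mem_smul_set.mp hx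
    intro i
    exact Set.mem_smul_set.mpr ⟨y i, trivial, rfl⟩
  · intro hx
    choose y hy using fun i => Set.mem_smul_set.mp (hx i)
    exact Set.mem_smul_set.mpr ⟨fun i => y i, trivial, funext fun i => (hy i).2⟩

end PiLemmas

section Transport

variable {X Y : Type} [AddCommGroup X] [Module R X] [AddCommGroup Y] [Module R Y]

lemma map_torsionBy (e : X ≃ₗ[R] Y) (p : R) :
    Submodule.map (e : X →ₗ[R] Y) (Submodule.torsionBy R X p)
      = Submodule.torsionBy R Y p := by
  ext y
  simp only [Submodule.mem_map, Submodule.mem_torsionBy_iff]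
  constructor
  · rintro ⟨x, hx, rfl⟩
    rw [LinearEquiv.coe_coe, ← map_smul, hx, map_zero]
  · intro hy
    refine ⟨e.symm y, ?_, by simp⟩
    rw [← map_smul, hy, map_zero]

lemma map_smul_top (e : X ≃ₗ[R] Y) (p : R) :
    Submodule.map (e : X →ₗ[R] Y) (p • ⊤ : Submodule R X) = (p • ⊤ : Submodule R Y) := by
  rw [Submodule.map_pointwise_smul, Submodule.map_top, LinearEquiv.range]

end Transport

noncomputable def collapseEquiv {ι : Type} [Fintype ι] (P : ι → Prop) [DecidablePred P]
    (Q : ι → Type) [∀ i, AddCommGroup (Q i)] [∀ i, Module R (Q i)]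
    (K : Type) [AddCommGroup K] [Module R K]
    (q : ∀ i, P i → (Q i ≃ₗ[R] K)) (hsub : ∀ i, ¬ P i → Subsingleton (Q i)) :
    (∀ i, Q i) ≃ₗ[R] ({ i // P i } → K) := by
  refine LinearEquiv.ofLinear
    (LinearMap.pi fun s : {i // P i} => (q s.1 s.2).toLinearMap ∘ₗ LinearMap.proj s.1)
    (LinearMap.pi fun i => if h : P i then
        ((q i h).symm.toLinearMap ∘ₗ LinearMap.proj (⟨i, h⟩ : {i // P i})) else 0) ?_ ?_
  · refine LinearMap.ext fun y => funext fun s => ?_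
    simp [LinearMap.pi_apply, dif_pos s.2]
  · refine LinearMap.ext fun x => funext fun i => ?_
    by_cases h : P i
    · simp [LinearMap.pi_apply, dif_pos h]
    · haveI := hsub i h
      exact Subsingleton.elim _ _

lemma quot_smul_eq (I : Ideal R) (r : R) (y : R ⧸ I) :
    (Ideal.Quotient.mk I r) • y = r • y := by
  obtain ⟨z, rfl⟩ := Ideal.Quotient.mk_surjective y
  have h1 : (Ideal.Quotient.mk I r) • (Ideal.Quotient.mk I z) = Ideal.Quotient.mk I (r * z) :=
    (map_mul _ _ _).symm
  have h2 : r • (Ideal.Quotient.mk I z) = Ideal.Quotient.mk I (r * z) := by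
    rw [← Ideal.Quotient.mk_eq_mk, ← Ideal.Quotient.mk_eq_mk, ← Submodule.Quotient.mk_smul,
      smul_eq_mul]
  rw [h1, h2]

noncomputable def upgradeK (I : Ideal R) (S T : Type)
    (E : (S → R ⧸ I) ≃ₗ[R] (T → R ⧸ I)) : (S → R ⧸ I) ≃ₗ[R ⧸ I] (T → R ⧸ I) where
  toFun := E
  invFun := E.symm
  left_inv := E.left_inv
  right_inv := E.right_inv
  map_add' := E.map_add
  map_smul' := by
    intro k x
    obtain ⟨r, rfl⟩ := Ideal.Quotient.mk_surjective k
    have hx : ∀ (x : S → R ⧸ I), (Ideal.Quotient.mk I r) • x = r • x :=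
      fun x => funext fun s => quot_smul_eq I r (x s)
    have hy : ∀ (y : T → R ⧸ I), (Ideal.Quotient.mk I r) • y = r • y :=
      fun y => funext fun s => quot_smul_eq I r (y s)
    simp only [hx, hy, map_smul, RingHom.id_apply]
noncomputable def quotPiSmulTopEquiv {ι : Type} [Fintype ι] [DecidableEq ι] {p : R} (hp : Prime p)
    (a : ι → R) [DecidablePred (fun i => p ∣ a i)] :
    ((∀ i, R ⧸ Ideal.span {a i}) ⧸ (p • ⊤ : Submodule R (∀ i, R ⧸ Ideal.span {a i})))
      ≃ₗ[R] ({i // p ∣ a i} → R ⧸ Ideal.span {p}) :=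
  (Submodule.quotEquivOfEq _ _ (smul_top_pi p)).trans <|
  (Submodule.quotientPi _).trans <|
  (LinearEquiv.piCongrRight fun i => quotSmulTopEquiv p (a i)).trans <|
  collapseEquiv (fun i => p ∣ a i) _ (R ⧸ Ideal.span {p})
    (fun i h => Submodule.quotEquivOfEq _ _
      (sup_eq_right.mpr (Ideal.span_singleton_le_span_singleton.mpr h)))
    (fun i h => (Submodule.Quotient.subsingleton_iff).mpr
      ((Ideal.sup_eq_top_iff_isCoprime _ _).mpr ((hp.coprime_iff_not_dvd.mpr h).symm)))

lemma card_dvd_eq_of_equiv {ι κ : Type} [Fintype ι] [Fintype κ] [DecidableEq ι] [DecidableEq κ]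
    {p : R} (hp : Prime p)
    (a : ι → R) (c : κ → R) [DecidablePred (fun i => p ∣ a i)] [DecidablePred (fun j => p ∣ c j)]
    (e : (∀ i, R ⧸ Ideal.span {a i}) ≃ₗ[R] (∀ j, R ⧸ Ideal.span {c j})) :
    Fintype.card {i // p ∣ a i} = Fintype.card {j // p ∣ c j} := by
  classical
  haveI : Nontrivial (R ⧸ Ideal.span {p}) :=
    Ideal.Quotient.nontrivial_iff.mpr (fun h => hp.not_isUnit (Ideal.span_singleton_eq_top.mp h))
  let Ea := quotPiSmulTopEquiv hp a
  let Ec := quotPiSmulTopEquiv hp c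
  let mid := Submodule.Quotient.equiv _ _ e (map_smul_top e p)
  have h1 := (upgradeK (Ideal.span {p}) _ _ ((Ea.symm.trans mid).trans Ec)).finrank_eq
  rwa [Module.finrank_pi, Module.finrank_pi] at h1

noncomputable def quotPiTorsionByEquiv {ι : Type} [Fintype ι] [DecidableEq ι] (p : R)
    (a b : ι → R) (h : ∀ i (y : R), a i ∣ p * y ↔ b i ∣ y) :
    ((∀ i, R ⧸ Ideal.span {a i}) ⧸ Submodule.torsionBy R (∀ i, R ⧸ Ideal.span {a i}) p)
      ≃ₗ[R] (∀ i, R ⧸ Ideal.span {b i}) :=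
  (Submodule.quotEquivOfEq _ _ (torsionBy_pi p)).trans <|
  (Submodule.quotientPi _).trans <|
  LinearEquiv.piCongrRight fun i => quotTorsionByEquiv p (a i) (b i) (h i)

lemma unit_case {ι κ : Type} [Fintype ι] [Fintype κ] (a : ι → R) (c : κ → R)
    (hu : IsUnit (∏ i, a i))
    (e : (∀ i, R ⧸ Ideal.span {a i}) ≃ₗ[R] (∀ j, R ⧸ Ideal.span {c j})) :
    Associated (∏ i, a i) (∏ j, c j) := by
  classical
  haveI hsub : Subsingleton (∀ i, R ⧸ Ideal.span {a i}) := by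
    constructor
    intro x y
    funext i
    have hone : Ideal.span {a i} = ⊤ := Ideal.span_singleton_eq_top.mpr
      (isUnit_of_dvd_unit (Finset.dvd_prod_of_mem a (Finset.mem_univ i)) hu)
    haveI : Subsingleton (R ⧸ Ideal.span {a i}) :=
      (Submodule.Quotient.subsingleton_iff).mpr hone
    exact Subsingleton.elim _ _
  haveI hsub2 : Subsingleton (∀ j, R ⧸ Ideal.span {c j}) := by
    constructor
    intro x y
    have h1 : e.symm x = e.symm y := Subsingleton.elim _ _
    calc x = e (e.symm x) := (e.apply_symm_apply x).symm
      _ = e (e.symm y) := by rw [h1]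
      _ = y := e.apply_symm_apply y
  have hcj : ∀ j, IsUnit (c j) := by
    intro j
    haveI : Subsingleton (R ⧸ Ideal.span {c j}) := by
      constructor
      intro x y
      have h1 := congrFun (Subsingleton.elim
        (Pi.single (M := fun j' => R ⧸ Ideal.span {c j'}) j x)
        (Pi.single (M := fun j' => R ⧸ Ideal.span {c j'}) j y)) j
      simpa using h1
    exact Ideal.span_singleton_eq_top.mp
      ((Submodule.Quotient.subsingleton_iff).mp this)
  have hc' : IsUnit (∏ j, c j) :=
    Finset.prod_induction _ IsUnit (fun _ _ => IsUnit.mul) isUnit_one (fun j _ => hcj j)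
  exact (associated_one_iff_isUnit.mpr hu).trans (associated_one_iff_isUnit.mpr hc').symm

lemma keyB [NormalizationMonoid R] (N : ℕ) :
    ∀ {ι κ : Type} [Fintype ι] [Fintype κ] (a : ι → R) (c : κ → R),
    (∀ i, a i ≠ 0) → (∀ j, c j ≠ 0) →
    Multiset.card (normalizedFactors (∏ i, a i)) ≤ N →
    ((∀ i, R ⧸ Ideal.span {a i}) ≃ₗ[R] (∀ j, R ⧸ Ideal.span {c j})) →
    Associated (∏ i, a i) (∏ j, c j) := by
  induction N with
  | zero =>
    intro ι κ _ _ a c ha hc hcard e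
    by_cases hu : IsUnit (∏ i, a i)
    · exact unit_case a c hu e
    · exfalso
      have hane : (∏ i, a i) ≠ 0 := Finset.prod_ne_zero_iff.mpr (fun i _ => ha i)
      obtain ⟨p, hpirr, hpdvd⟩ := WfDvdMonoid.exists_irreducible_factor hu hane
      obtain ⟨q, hq, -⟩ := exists_mem_normalizedFactors_of_dvd hane hpirr hpdvd
      have := Multiset.card_pos.mpr (fun h0 => Multiset.notMem_zero q (h0 ▸ hq))
      omega
  | succ N IH =>
    intro ι κ _ _ a c ha hc hcard e
    classical
    by_cases hu : IsUnit (∏ i, a i)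
    · exact unit_case a c hu e
    have hane : (∏ i, a i) ≠ 0 := Finset.prod_ne_zero_iff.mpr (fun i _ => ha i)
    obtain ⟨p, hpirr, hpdvd⟩ := WfDvdMonoid.exists_irreducible_factor hu hane
    have hp : Prime p := hpirr.prime
    have hchoose : ∀ (x : R), ∃ y, (p ∣ x → x = p * y) ∧ (¬ p ∣ x → y = x) := by
      intro x
      by_cases h : p ∣ x
      · obtain ⟨y, hy⟩ := h
        exact ⟨y, fun _ => hy, fun h' => absurd ⟨y, hy⟩ h'⟩
      · exact ⟨x, fun h' => absurd h' h, fun _ => rfl⟩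
    choose red hred1 hred2 using hchoose
    -- key facts about red
    have hfac : ∀ x : R, x = (if p ∣ x then p else 1) * red x := by
      intro x
      by_cases h : p ∣ x
      · rw [if_pos h]; exact hred1 x h
      · rw [if_neg h, one_mul, hred2 x h]
    have hredne : ∀ x : R, x ≠ 0 → red x ≠ 0 := by
      intro x hx h0
      by_cases h : p ∣ x
      · exact hx (by rw [hred1 x h, h0, mul_zero])
      · exact hx (by rw [← hred2 x h, h0])
    have hdvd : ∀ x y : R, x ≠ 0 → (x ∣ p * y ↔ red x ∣ y) := by
      intro x y hx
      by_cases h : p ∣ x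
      · exact dvd_aux hp (hred1 x h) y
      · rw [hred2 x h]; exact dvd_aux' hp h y
    -- the reduced families
    set b : ι → R := fun i => red (a i) with hb
    set d : κ → R := fun j => red (c j) with hd
    -- product identities
    have hprodgen : ∀ {σ : Type} [Fintype σ] (f : σ → R),
        ∏ i, f i = p ^ (Finset.univ.filter (fun i => p ∣ f i)).card * ∏ i, red (f i) := by
      intro σ _ f
      calc ∏ i, f i = ∏ i, ((if p ∣ f i then p else 1) * red (f i)) := by
            refine Finset.prod_congr rfl fun i _ => hfac (f i)
        _ = (∏ i, if p ∣ f i then p else 1) * ∏ i, red (f i) := Finset.prod_mul_distrib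
        _ = p ^ (Finset.univ.filter (fun i => p ∣ f i)).card * ∏ i, red (f i) := by
            rw [Finset.prod_ite, Finset.prod_const, Finset.prod_const_one, mul_one]
    -- the transported equivalence
    have e2 : (∀ i, R ⧸ Ideal.span {b i}) ≃ₗ[R] (∀ j, R ⧸ Ideal.span {d j}) :=
      ((quotPiTorsionByEquiv p a b (fun i y => hdvd (a i) y (ha i))).symm.trans
        (Submodule.Quotient.equiv _ _ e (map_torsionBy e p))).trans
        (quotPiTorsionByEquiv p c d (fun j y => hdvd (c j) y (hc j)))
    -- cardinalities agree
    have hcards : (Finset.univ.filter (fun i => p ∣ a i)).card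
        = (Finset.univ.filter (fun j => p ∣ c j)).card := by
      rw [← Fintype.card_subtype, ← Fintype.card_subtype]
      exact card_dvd_eq_of_equiv hp a c e
    -- m ≥ 1
    have hm1 : 1 ≤ (Finset.univ.filter (fun i => p ∣ a i)).card := by
      obtain ⟨i, -, hi⟩ := hp.exists_mem_finset_dvd hpdvd
      exact Finset.card_pos.mpr ⟨i, Finset.mem_filter.mpr ⟨Finset.mem_univ i, hi⟩⟩
    have hbne : (∏ i, b i) ≠ 0 := Finset.prod_ne_zero_iff.mpr (fun i _ => hredne _ (ha i))
    -- card bound for IH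
    have hbound : Multiset.card (normalizedFactors (∏ i, b i)) ≤ N := by
      have hsplit := hprodgen a
      set m := (Finset.univ.filter (fun i => p ∣ a i)).card
      have hpm : (p ^ m : R) ≠ 0 := pow_ne_zero _ hp.ne_zero
      have : normalizedFactors (∏ i, a i)
          = normalizedFactors (p ^ m) + normalizedFactors (∏ i, b i) := by
        rw [hsplit]
        exact normalizedFactors_mul hpm hbne
      have hcardeq : Multiset.card (normalizedFactors (∏ i, a i))
          = m + Multiset.card (normalizedFactors (∏ i, b i)) := by
        rw [this, Multiset.card_add, hpirr.normalizedFactors_pow, Multiset.card_replicate]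
      omega
    have hIH := IH b d (fun i => hredne _ (ha i)) (fun j => hredne _ (hc j)) hbound e2
    rw [hprodgen a, hprodgen c, hcards]
    exact Associated.mul_left _ hIH


/-- **Fitting ideal vs determinant over a PID.**
Let `R` be a PID and `M` a free `R`-module of finite rank `n`.  If `u : M → M` is an
`R`-linear endomorphism whose image is also free of rank `n`, then for any invariant
factor decomposition `M ⧸ u(M) ≅ ⊕ R/(aᵢ)` (with divisibility chain `aᵢ ∣ aᵢ₊₁`), the
Fitting ideal `(∏ aᵢ)` equals the ideal generated by `det u`. -/
theorem fitting_ideal_eq_det {R M : Type} [CommRing R] [IsDomain R]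
    [IsPrincipalIdealRing R] [AddCommGroup M] [Module R M]
    [Module.Free R M] [Module.Finite R M]
    (n : ℕ) (hn : Module.finrank R M = n)
    (u : M →ₗ[R] M)
    (hfree : Module.Free R (LinearMap.range u))
    (hrank : Module.finrank R (LinearMap.range u) = n)
    (ℓ : ℕ) (a : Fin ℓ → R)
    (hchain : ∀ i j : Fin ℓ, i ≤ j → a i ∣ a j)
    (e : (M ⧸ LinearMap.range u) ≃ₗ[R] ((i : Fin ℓ) → R ⧸ Ideal.span {a i})) :
    Ideal.span {∏ i, a i} = Ideal.span {LinearMap.det u} := by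
  classical
  set N : Submodule R M := LinearMap.range u with hNdef
  let b : Module.Basis (Module.Free.ChooseBasisIndex R M) R M := Module.Free.chooseBasis R M
  set ι := Module.Free.ChooseBasisIndex R M
  obtain ⟨n', snf⟩ := N.smithNormalForm b
  clear b
  set b : Module.Basis ι R M := snf.bM with hbdef
  have hcard : Fintype.card (Fin n') = Fintype.card ι := by
    rw [Fintype.card_fin]
    have h1 : Module.finrank R N = n' := by
      rw [Module.finrank_eq_card_basis snf.bN, Fintype.card_fin]
    have h2 : Module.finrank R M = Fintype.card ι := Module.finrank_eq_card_basis b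
    omega
  let g : Fin n' ≃ ι := Equiv.ofBijective snf.f
    ((Fintype.bijective_iff_injective_and_card snf.f).mpr ⟨snf.f.injective, hcard⟩)
  let c : ι → R := fun i => snf.a (g.symm i)
  have hgf : ∀ j, g j = snf.f j := fun j => rfl
  have hcg : ∀ j, c (g j) = snf.a j := fun j => by
    show snf.a (g.symm (g j)) = snf.a j
    rw [Equiv.symm_apply_apply]
  -- injectivity of u
  let ψ : N ≃ₗ[R] M := snf.bN.equiv b g
  have hinj : Function.Injective u := by
    have hsurj : Function.Surjective (ψ.toLinearMap ∘ₗ u.rangeRestrict) :=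
      ψ.surjective.comp u.surjective_rangeRestrict
    have hinj0 := OrzechProperty.injective_of_surjective_endomorphism
      (ψ.toLinearMap ∘ₗ u.rangeRestrict) hsurj
    intro x y hxy
    exact hinj0 (by simp only [LinearMap.comp_apply]; exact congrArg ψ (Subtype.ext hxy))
  -- the diagonal map v
  let v : M →ₗ[R] M := Module.Basis.constr b R (fun i => c i • b i)
  have hv : ∀ i, v (b i) = c i • b i := fun i => Module.Basis.constr_basis b R _ i
  have hdetv : LinearMap.det v = ∏ i, c i := by
    have hm : LinearMap.toMatrix b b v = Matrix.diagonal c := by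
      ext i j
      rw [LinearMap.toMatrix_apply, hv j]
      simp only [map_smul, Module.Basis.repr_self, Finsupp.smul_apply, Finsupp.single_apply,
        Matrix.diagonal_apply, smul_eq_mul]
      by_cases h : i = j
      · subst h; simp
      · simp [h, Ne.symm h]
    rw [← LinearMap.det_toMatrix b, hm, Matrix.det_diagonal]
  have hrange : LinearMap.range v = N := by
    have h1 : LinearMap.range v = Submodule.span R (Set.range fun i => c i • b i) :=
      Module.Basis.constr_range b R
    have hNspan : N = Submodule.span R (Set.range fun j : Fin n' => (snf.a j • b (snf.f j) : M)) := by
      conv_lhs => rw [← Submodule.map_subtype_top N, ← snf.bN.span_eq, Submodule.map_span]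
      rw [← Set.range_comp]
      exact congrArg _ (congrArg _ (funext fun j => snf.snf j))
    have hcomp : (fun i : ι => c i • b i) ∘ g = fun j : Fin n' => snf.a j • b (snf.f j) := by
      funext j
      show c (g j) • b (g j) = snf.a j • b (snf.f j)
      rw [hcg, hgf]
    rw [h1, hNspan, ← hcomp, Set.range_comp, Set.range_eq_univ.mpr g.surjective,
      Set.image_univ]
  have hvinj : Function.Injective v := by
    have hsurj2 : Function.Surjective
        (ψ.toLinearMap ∘ₗ (LinearEquiv.ofEq _ _ hrange).toLinearMap ∘ₗ v.rangeRestrict) :=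
      ψ.surjective.comp ((LinearEquiv.ofEq _ _ hrange).surjective.comp
        v.surjective_rangeRestrict)
    have hinj0 := OrzechProperty.injective_of_surjective_endomorphism _ hsurj2
    intro x y hxy
    exact hinj0 (by simp only [LinearMap.comp_apply]
                    exact congrArg _ (congrArg _ (Subtype.ext hxy)))
  let vE : M ≃ₗ[R] N := (LinearEquiv.ofInjective v hvinj).trans (LinearEquiv.ofEq _ _ hrange)
  let uE : M ≃ₗ[R] N := LinearEquiv.ofInjective u hinj
  let w : M ≃ₗ[R] M := uE.trans vE.symm
  have hvE : ∀ x : M, (vE x : M) = v x := fun x => rfl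
  have huE : ∀ x : M, (uE x : M) = u x := fun x => rfl
  have hcomp : ∀ x, u x = v (w x) := by
    intro x
    have h3 : v (vE.symm (uE x)) = ((vE (vE.symm (uE x))) : M) := (hvE _).symm
    rw [show w x = vE.symm (uE x) from rfl, h3, vE.apply_symm_apply, huE]
  have hdetassoc : Associated (LinearMap.det u) (LinearMap.det v) :=
    LinearMap.associated_det_of_eq_comp w u v hcomp
  -- membership criterion for N
  have mem_N_iff : ∀ x : M, x ∈ N ↔ ∀ i, c i ∣ b.repr x i := by
    intro x
    constructor
    · intro hx i
      have h1 := snf.repr_apply_embedding_eq_repr_smul (m := ⟨x, hx⟩) (i := g.symm i)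
      have h2 : snf.f (g.symm i) = i := g.apply_symm_apply i
      rw [h2] at h1
      refine ⟨snf.bN.repr ⟨x, hx⟩ (g.symm i), ?_⟩
      rw [show (b.repr x) i = snf.bM.repr ((⟨x, hx⟩ : N) : M) i from rfl, h1, map_smul,
        Finsupp.smul_apply, smul_eq_mul]
    · intro hdvd
      choose t ht using fun i => hdvd i
      let y : N := ∑ j : Fin n', t (g j) • snf.bN j
      have hy : (y : M) = ∑ i, (c i * t i) • b i := by
        have h1 : (y : M) = ∑ j : Fin n', (fun i => (c i * t i) • b i) (g j) := by
          rw [show (y : M) = ∑ j : Fin n', ((t (g j) • snf.bN j : N) : M) from by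
            simp [y]]
          refine Finset.sum_congr rfl fun j _ => ?_
          show ((t (g j) • snf.bN j : N) : M) = (c (g j) * t (g j)) • b (g j)
          rw [Submodule.coe_smul, snf.snf j, hcg, hgf, smul_smul, mul_comm]
        rw [h1, Equiv.sum_comp g (fun i => (c i * t i) • b i)]
      have hxy : x = (y : M) := by
        apply b.ext_elem
        intro i
        rw [hy]
        have h2 : b.repr (∑ i, (c i * t i) • b i) = fun i => c i * t i :=
          b.repr_sum_self _
        rw [show (b.repr (∑ i, (c i * t i) • b i)) i
            = (fun i => c i * t i) i from by rw [h2], ht i]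
      rw [hxy]
      exact y.2
  -- map of N under the coordinate equivalence
  have hmap : Submodule.map (b.equivFun : M →ₗ[R] (ι → R)) N
      = Submodule.pi Set.univ (fun i => Ideal.span {c i}) := by
    ext x
    simp only [Submodule.mem_map, Submodule.mem_pi, Set.mem_univ, forall_true_left,
      Ideal.mem_span_singleton, LinearEquiv.coe_coe, Module.Basis.equivFun_apply]
    constructor
    · rintro ⟨y, hy, rfl⟩ i
      exact (mem_N_iff y).mp hy i
    · intro hdvd
      refine ⟨∑ i, x i • b i, (mem_N_iff _).mpr fun i => ?_, ?_⟩
      · rw [show b.repr (∑ i, x i • b i) i = x i from by rw [b.repr_sum_self]]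
        exact hdvd i
      · funext i
        rw [show b.repr (∑ i, x i • b i) i = x i from by rw [b.repr_sum_self]]
  let qe : (M ⧸ N) ≃ₗ[R] ∀ i, R ⧸ Ideal.span {c i} :=
    (Submodule.Quotient.equiv N _ b.equivFun hmap).trans (Submodule.quotientPi _)
  let eBig : (∀ j, R ⧸ Ideal.span {a j}) ≃ₗ[R] (∀ i, R ⧸ Ideal.span {c i}) :=
    e.symm.trans qe
  -- c i ≠ 0
  have hcne : ∀ i, c i ≠ 0 := by
    intro i h0
    have h1 := snf.snf (g.symm i)
    rw [show snf.a (g.symm i) = c i from rfl, h0, zero_smul] at h1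
    exact (snf.bN.ne_zero (g.symm i)) (by exact_mod_cast h1)
  -- a j ≠ 0
  have hane : ∀ j, a j ≠ 0 := by
    intro j h0
    set q := ∏ i, c i with hq
    have hqne : q ≠ 0 := Finset.prod_ne_zero_iff.mpr fun i _ => hcne i
    have hq0 : ∀ z : (∀ i, R ⧸ Ideal.span {c i}), q • z = 0 := by
      intro z
      funext i
      obtain ⟨w', hw'⟩ := Submodule.Quotient.mk_surjective _ (z i)
      rw [Pi.smul_apply, Pi.zero_apply, ← hw', ← Submodule.Quotient.mk_smul,
        Submodule.Quotient.mk_eq_zero]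
      exact Ideal.mem_span_singleton.mpr
        ((Finset.dvd_prod_of_mem c (Finset.mem_univ i)).trans (Dvd.intro w' rfl))
    have hx0 : q • (Pi.single (M := fun j' => R ⧸ Ideal.span {a j'}) j
        (Submodule.Quotient.mk 1)) = 0 := by
      apply eBig.injective
      rw [map_smul, hq0 _, map_zero]
    have hcomp2 := congrFun hx0 j
    rw [Pi.smul_apply, Pi.single_eq_same, Pi.zero_apply, ← Submodule.Quotient.mk_smul,
      Submodule.Quotient.mk_eq_zero, h0] at hcomp2
    have : q • (1 : R) ∈ (⊥ : Ideal R) := by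
      rwa [show Ideal.span {(0 : R)} = ⊥ from by simp] at hcomp2
    rw [Submodule.mem_bot, smul_eq_mul, mul_one] at this
    exact hqne this
  letI : NormalizationMonoid R := UniqueFactorizationMonoid.normalizationMonoid.toNormalizationMonoid
  have hassoc1 : Associated (∏ j, a j) (∏ i, c i) :=
    keyB _ a c hane hcne le_rfl eBig
  have hfinal : Associated (∏ j, a j) (LinearMap.det u) := by
    refine hassoc1.trans ?_
    rw [← hdetv]
    exact hdetassoc.symm
  exact Ideal.span_singleton_eq_span_singleton.mpr hfinal
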